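/- Suppose G has no loops and contains an independent set of size k, i.e., k distinct vertices that are pairwise non-adjacent in G. Then P(S^n_{(n−k)+}) is closed. -/

import Mathlib

open Matrix

/-- PSD matrices of rank at most `r`, indexed by a finite type. -/
def psdRank (ι : Type) [Fintype ι] [DecidableEq ι] (r : ℕ) : Set (Matrix ι ι ℝ) :=
  {X | X.PosSemidef ∧ X.rank ≤ r}

/-- Coordinate projection onto the entries indexed by `E`. -/
def proj {n : ℕ} (E : Set (Fin n × Fin n)) (X : Matrix (Fin n) (Fin n) ℝ) : E → ℝ :=
  fun p => X p.1.1 p.1.2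

/-- The simple graph underlying the index set `E` (loops discarded). -/
def graphOf {n : ℕ} (E : Set (Fin n × Fin n)) : SimpleGraph (Fin n) where
  Adj i j := i ≠ j ∧ ((i, j) ∈ E ∨ (j, i) ∈ E)
  symm := by
    refine ⟨fun i j h => ?_⟩
    exact ⟨h.1.symm, h.2.symm⟩
  loopless := by
    refine ⟨fun i h => ?_⟩
    exact h.1 rfl

lemma posdef_add_big_smul {m : Type} [Fintype m] [DecidableEq m]
    (M : Matrix m m ℝ) (hM : M.IsHermitian) :
    (M + ((∑ i, ∑ j, |M i j|) + 1) • 1).PosDef := by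
  set c : ℝ := (∑ i, ∑ j, |M i j|) + 1 with hc
  rw [Matrix.posDef_iff_dotProduct_mulVec]
  constructor
  · refine hM.add ?_
    unfold Matrix.IsHermitian
    ext i j
    simp [Matrix.conjTranspose_apply, Matrix.one_apply, eq_comm]
  · intro x hx
    have hs : 0 < dotProduct (star x) x := dotProduct_star_self_pos_iff.2 hx
    have hsx : dotProduct (star x) x = ∑ i, x i * x i := by
      simp [dotProduct]
    set s : ℝ := ∑ i, x i * x i with hsdef
    have hs' : 0 < s := by rw [← hsx]; exact hs
    have hsq : ∀ i, x i * x i ≤ s := by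
      intro i
      exact Finset.single_le_sum (fun j _ => mul_self_nonneg (x j)) (Finset.mem_univ i)
    have key : dotProduct (star x) ((M + c • 1) *ᵥ x)
        = (∑ i, ∑ j, x i * (M i j * x j)) + c * s := by
      have h1 : ∀ i, ((M + c • 1) *ᵥ x) i = (∑ j, M i j * x j) + c * x i := by
        intro i
        simp only [Matrix.mulVec, dotProduct, Matrix.add_apply, Matrix.smul_apply,
          Matrix.one_apply, smul_eq_mul, mul_ite, mul_one, mul_zero, add_mul, ite_mul,
          zero_mul, Finset.sum_add_distrib]
        simp [mul_comm]
      simp only [dotProduct, star_trivial, h1]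
      calc ∑ i, x i * ((∑ j, M i j * x j) + c * x i)
          = ∑ i, ((∑ j, x i * (M i j * x j)) + c * (x i * x i)) :=
            Finset.sum_congr rfl fun i _ => by rw [mul_add, Finset.mul_sum]; ring_nf
        _ = (∑ i, ∑ j, x i * (M i j * x j)) + c * s := by
            rw [Finset.sum_add_distrib, ← Finset.mul_sum, hsdef]
    have hbound : ∀ i j, -(|M i j| * s) ≤ x i * (M i j * x j) := by
      intro i j
      have h1 : |x i * x j| ≤ s := by
        have h2 : |x i| * |x j| ≤ (x i * x i + x j * x j) / 2 := by
          nlinarith [sq_nonneg (|x i| - |x j|), abs_nonneg (x i), abs_nonneg (x j),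
            abs_mul_abs_self (x i), abs_mul_abs_self (x j)]
        have h3 : (x i * x i + x j * x j) / 2 ≤ s := by
          have := hsq i; have := hsq j; linarith
        calc |x i * x j| = |x i| * |x j| := abs_mul _ _
          _ ≤ _ := le_trans h2 h3
      have h4 : -(|M i j| * s) ≤ -(|M i j| * |x i * x j|) := by
        have := abs_nonneg (M i j)
        nlinarith
      refine le_trans h4 ?_
      have h5 : |M i j * (x i * x j)| ≤ |M i j| * |x i * x j| := by
        rw [abs_mul]
      calc -(|M i j| * |x i * x j|) ≤ -|M i j * (x i * x j)| := by linarith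
        _ ≤ M i j * (x i * x j) := neg_abs_le _
        _ = x i * (M i j * x j) := by ring
    have hsum : -((∑ i, ∑ j, |M i j|) * s) ≤ ∑ i, ∑ j, x i * (M i j * x j) := by
      calc -((∑ i, ∑ j, |M i j|) * s) = ∑ i, ∑ j, -(|M i j| * s) := by
            rw [Finset.sum_mul, ← Finset.sum_neg_distrib]
            congr 1
            ext i
            rw [Finset.sum_mul, ← Finset.sum_neg_distrib]
        _ ≤ _ := Finset.sum_le_sum fun i _ => Finset.sum_le_sum fun j _ => hbound i j
    rw [key]
    have : c * s = (∑ i, ∑ j, |M i j|) * s + s := by rw [hc]; ring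
    nlinarith

open Classical in
/-- Symmetric extension of edge data to all pairs of indices. -/
noncomputable def abar {n : ℕ} (E : Set (Fin n × Fin n)) (a : E → ℝ) (i j : Fin n) : ℝ :=
  if h : (i, j) ∈ E then a ⟨(i, j), h⟩ else if h' : (j, i) ∈ E then a ⟨(j, i), h'⟩ else 0

lemma abar_symm {n : ℕ} (E : Set (Fin n × Fin n))
    (hup : ∀ p ∈ E, p.1 ≤ p.2) (hloop : ∀ v : Fin n, (v, v) ∉ E)
    (a : E → ℝ) (i j : Fin n) : abar E a i j = abar E a j i := by
  by_cases h1 : (i, j) ∈ E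
  · by_cases h2 : (j, i) ∈ E
    · exfalso
      have hij : i ≤ j := hup _ h1
      have hji : j ≤ i := hup _ h2
      have : i = j := le_antisymm hij hji
      exact hloop i (this ▸ h1)
    · simp [abar, h1, h2]
  · by_cases h2 : (j, i) ∈ E
    · simp [abar, h1, h2]
    · simp [abar, h1, h2]

/-- Existence of a low-rank PSD completion with prescribed entries on `E`,
given an independent set `S`. -/
lemma exists_completion {n : ℕ} (E : Set (Fin n × Fin n))
    (hup : ∀ p ∈ E, p.1 ≤ p.2) (hloop : ∀ v : Fin n, (v, v) ∉ E)
    (S : Finset (Fin n))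
    (hind : ∀ i ∈ S, ∀ j ∈ S, i ≠ j → (i, j) ∉ E ∧ (j, i) ∉ E)
    (a : E → ℝ) :
    ∃ X : Matrix (Fin n) (Fin n) ℝ, X.PosSemidef ∧ X.rank ≤ n - S.card ∧
      ∀ p : E, X p.1.1 p.1.2 = a p := by
  classical
  set T := {u : Fin n // u ∉ S} with hT
  set M : Matrix T T ℝ := Matrix.of (fun u v => abar E a u.1 v.1) with hM
  have hMH : M.IsHermitian := by
    unfold Matrix.IsHermitian
    ext u v
    simp only [Matrix.conjTranspose_apply, hM, Matrix.of_apply, star_trivial]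
    exact abar_symm E hup hloop a v.1 u.1
  set c : ℝ := (∑ i, ∑ j, |M i j|) + 1 with hc
  set A : Matrix T T ℝ := M + c • 1 with hA
  have hApd : A.PosDef := posdef_add_big_smul M hMH
  have hdet : IsUnit A.det := (Matrix.isUnit_iff_isUnit_det A).mp hApd.isUnit
  set f : Fin n → (T → ℝ) := fun i =>
    if h : i ∈ S then A⁻¹ *ᵥ (fun u => abar E a u.1 i) else Pi.single ⟨i, h⟩ 1 with hf
  set F : Matrix (Fin n) T ℝ := Matrix.of f with hF
  set X : Matrix (Fin n) (Fin n) ℝ := F * A * Fᴴ with hX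
  have hXpsd : X.PosSemidef := hApd.posSemidef.mul_mul_conjTranspose_same F
  have hcard : Fintype.card T = n - S.card := by
    have h1 : Fintype.card {u : Fin n // u ∈ S} = S.card := Fintype.card_coe S
    have h2 := Fintype.card_subtype_compl (fun u : Fin n => u ∈ S)
    simp only [Fintype.card_fin, h1] at h2
    exact h2
  have hrank : X.rank ≤ n - S.card := by
    calc X.rank ≤ (F * A).rank := Matrix.rank_mul_le_left (F * A) Fᴴ
      _ ≤ F.rank := Matrix.rank_mul_le_left F A
      _ ≤ Fintype.card T := Matrix.rank_le_card_width F
      _ = n - S.card := hcard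
  -- entry formula
  have hentry : ∀ i j, X i j = f i ⬝ᵥ (A *ᵥ f j) := by
    intro i j
    simp only [hX, Matrix.mul_apply, Matrix.conjTranspose_apply, star_trivial, hF,
      Matrix.of_apply, Matrix.mulVec, dotProduct, Finset.sum_mul, Finset.mul_sum]
    rw [Finset.sum_comm]
    exact Finset.sum_congr rfl fun u _ => Finset.sum_congr rfl fun v _ => by ring
  have hAf : ∀ j (hj : j ∈ S), A *ᵥ f j = fun u => abar E a u.1 j := by
    intro j hj
    rw [hf]
    simp only [dif_pos hj]
    rw [Matrix.mulVec_mulVec, Matrix.mul_nonsing_inv A hdet, Matrix.one_mulVec]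
  have hfns : ∀ i (hi : i ∉ S) (w : T → ℝ), f i ⬝ᵥ w = w ⟨i, hi⟩ := by
    intro i hi w
    rw [hf]
    simp only [dif_neg hi]
    rw [single_dotProduct, one_mul]
  -- entry computation for i ∉ S
  have hmain : ∀ i j (hi : i ∉ S) (hij : i ≠ j), X i j = abar E a i j := by
    intro i j hi hij
    rw [hentry, hfns i hi]
    by_cases hj : j ∈ S
    · rw [hAf j hj]
    · have : A *ᵥ f j = fun u => A u ⟨j, hj⟩ * 1 := by
        rw [hf]
        simp only [dif_neg hj]
        exact Matrix.mulVec_single A ⟨j, hj⟩ 1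
      rw [this]
      have hne : (⟨i, hi⟩ : T) ≠ ⟨j, hj⟩ := by
        intro h
        exact hij (congrArg Subtype.val h)
      simp only [mul_one, hA, Matrix.add_apply, Matrix.smul_apply, Matrix.one_apply,
        if_neg hne, smul_eq_mul, mul_zero, add_zero, hM, Matrix.of_apply]
  refine ⟨X, hXpsd, hrank, ?_⟩
  rintro ⟨⟨i, j⟩, hp⟩
  simp only
  have hij : i ≠ j := fun h => hloop i (h ▸ hp)
  have habar : abar E a i j = a ⟨(i, j), hp⟩ := by simp [abar, hp]
  by_cases hi : i ∈ S
  · by_cases hj : j ∈ S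
    · exact absurd hp (hind i hi j hj hij).1
    · have hsymm : X i j = X j i := by
        have h := hXpsd.1
        have := congrFun (congrFun h i) j
        rw [← this]
        simp [Matrix.conjTranspose_apply]
      rw [hsymm, hmain j i hj hij.symm, abar_symm E hup hloop a j i, habar]
  · rw [hmain i j hi hij, habar]

/-- If `G` has no loops and contains an independent set of
size `k`, then `P(Sⁿ₍ₙ₋ₖ₎₊)` is closed. -/
theorem stmt15 (n : ℕ) (hn : 2 ≤ n) (E : Set (Fin n × Fin n))
    (hup : ∀ p ∈ E, p.1 ≤ p.2)
    (hloop : ∀ v : Fin n, (v, v) ∉ E)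
    (k : ℕ) (S : Finset (Fin n)) (hcard : S.card = k)
    (hind : ∀ i ∈ S, ∀ j ∈ S, i ≠ j → (i, j) ∉ E ∧ (j, i) ∉ E) :
    IsClosed (proj E '' psdRank (Fin n) (n - k)) := by
  have huniv : proj E '' psdRank (Fin n) (n - k) = Set.univ := by
    apply Set.eq_univ_of_forall
    intro a
    obtain ⟨X, hpsd, hrank, hent⟩ := exists_completion E hup hloop S hind a
    refine ⟨X, ⟨hpsd, ?_⟩, funext fun p => hent p⟩
    rwa [hcard] at hrank
  rw [huniv]
  exact isClosed_univ
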